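/- Let g, m be positive integers with g/2 + 1 ≤ m ≤ g + 1, and let 1 ≤ k ≤ 2m - g - 2. Over the uniform distribution on numerical semigroups S with genus g, multiplicity m, and F(S) < 2m, the expected value of a_{k+1}(S) equals m + mk/(2m - g - 1). -/

import Mathlib

/-- A numerical semigroup: a subset of ℕ containing 0, closed under addition,
with finite complement. -/
def IsNumericalSemigroup (S : Set ℕ) : Prop :=
  0 ∈ S ∧ (∀ a ∈ S, ∀ b ∈ S, a + b ∈ S) ∧ Sᶜ.Finite

/-- The genus: number of gaps. -/
noncomputable def genus (S : Set ℕ) : ℕ := Sᶜ.ncard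

/-- The Frobenius number: the largest gap. -/
noncomputable def frob (S : Set ℕ) : ℕ := sSup Sᶜ

/-- `elt S k` is the k-th smallest nonzero element of `S` (1-indexed). -/
noncomputable def elt (S : Set ℕ) (k : ℕ) : ℕ :=
  Nat.nth (fun n => n ∈ S ∧ n ≠ 0) (k - 1)

/-- The multiplicity: the smallest nonzero element. -/
noncomputable def mult (S : Set ℕ) : ℕ := elt S 1


open Finset


lemma nth_finset_eq {B : Finset ℕ} {j x : ℕ} (hx : x ∈ B)
    (hc : #(B.filter (· < x)) = j) : Nat.nth (· ∈ B) j = x := by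
  have h := Nat.nth_count (p := (· ∈ B)) (n := x) hx
  have hcount : Nat.count (· ∈ B) x = j := by
    rw [Nat.count_eq_card_filter_range, ← hc]
    congr 1; ext y
    simp only [Finset.mem_filter, Finset.mem_range]
    exact and_comm
  rwa [hcount] at h

lemma setOf_finset_card (B : Finset ℕ) :
    ∀ hf : {n | n ∈ B}.Finite, #hf.toFinset = #B := by
  intro hf; congr 1; ext x; simp

lemma nth_finset_mem {B : Finset ℕ} {j : ℕ} (hj : j < #B) :
    Nat.nth (· ∈ B) j ∈ B := by
  have hf : {n | n ∈ B}.Finite := B.finite_toSet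
  have := Nat.nth_mem_of_lt_card hf (by rw [setOf_finset_card B hf]; exact hj)
  exact this

lemma nth_finset_count {B : Finset ℕ} {j : ℕ} (hj : j < #B) :
    #(B.filter (· < Nat.nth (· ∈ B) j)) = j := by
  have hf : {n | n ∈ B}.Finite := B.finite_toSet
  have h := Nat.count_nth_of_lt_card_finite (p := (· ∈ B)) hf
    (by rw [setOf_finset_card B hf]; exact hj)
  have heq : #(B.filter (· < Nat.nth (· ∈ B) j))
      = Nat.count (· ∈ B) (Nat.nth (· ∈ B) j) := by
    rw [Nat.count_eq_card_filter_range]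
    congr 1; ext y
    simp only [Finset.mem_filter, Finset.mem_range]
    exact and_comm
  rw [heq, h]

lemma nth_insert_lt {B : Finset ℕ} {n j : ℕ} (hB : ∀ b ∈ B, b < n) (hj : j < #B) :
    Nat.nth (· ∈ insert n B) j = Nat.nth (· ∈ B) j := by
  have hxB : Nat.nth (· ∈ B) j ∈ B := nth_finset_mem hj
  apply nth_finset_eq (Finset.mem_insert_of_mem hxB)
  rw [Finset.filter_insert, if_neg (by have := hB _ hxB; omega)]
  exact nth_finset_count hj

lemma nth_insert_top {B : Finset ℕ} {n : ℕ} (hB : ∀ b ∈ B, b < n) :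
    Nat.nth (· ∈ insert n B) #B = n := by
  apply nth_finset_eq (Finset.mem_insert_self n B)
  rw [Finset.filter_insert, if_neg (by omega), Finset.filter_true_of_mem hB]

lemma sum_nth_powersetCard : ∀ (n r j : ℕ), j < r →
    ∑ B ∈ (Icc 1 n).powersetCard r, Nat.nth (· ∈ B) j
      = (j + 1) * (n + 1).choose (r + 1) := by
  intro n
  induction n with
  | zero =>
    intro r j hj
    obtain ⟨r', rfl⟩ : ∃ r', r = r' + 1 := ⟨r - 1, by omega⟩
    rw [show Icc 1 0 = (∅ : Finset ℕ) by simp,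
      Finset.powersetCard_eq_empty.mpr (by simp),
      Nat.choose_eq_zero_of_lt (by omega)]
    simp
  | succ n ih =>
    intro r j hj
    obtain ⟨r', rfl⟩ : ∃ r', r = r' + 1 := ⟨r - 1, by omega⟩
    have hins : Icc 1 (n + 1) = insert (n + 1) (Icc 1 n) := by
      ext x; simp [Finset.mem_Icc, Finset.mem_insert]; omega
    have hnot : (n + 1) ∉ Icc 1 n := by simp
    rw [hins, Finset.powersetCard_succ_insert hnot]
    have hdisj : Disjoint ((Icc 1 n).powersetCard (r' + 1))
        (((Icc 1 n).powersetCard r').image (insert (n + 1))) := by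
      rw [Finset.disjoint_left]
      intro B hB hB2
      rw [Finset.mem_powersetCard] at hB
      obtain ⟨B', hB', rfl⟩ := Finset.mem_image.mp hB2
      exact hnot (hB.1 (Finset.mem_insert_self _ _))
    rw [Finset.sum_union hdisj]
    have hinj : ∀ x ∈ (Icc 1 n).powersetCard r', ∀ y ∈ (Icc 1 n).powersetCard r',
        insert (n + 1) x = insert (n + 1) y → x = y := by
      intro x hx y hy hxy
      rw [Finset.mem_powersetCard] at hx hy
      have h1 : (n + 1) ∉ x := fun h => hnot (hx.1 h)
      have h2 : (n + 1) ∉ y := fun h => hnot (hy.1 h)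
      rw [← Finset.erase_insert h1, ← Finset.erase_insert h2, hxy]
    rw [Finset.sum_image hinj]
    have hbound : ∀ B' ∈ (Icc 1 n).powersetCard r', ∀ b ∈ B', b < n + 1 := by
      intro B' hB' b hb
      rw [Finset.mem_powersetCard] at hB'
      have := hB'.1 hb
      rw [Finset.mem_Icc] at this
      omega
    rcases Nat.lt_or_ge j r' with hcase | hcase
    · have hcong : ∑ B' ∈ (Icc 1 n).powersetCard r',
          Nat.nth (· ∈ insert (n + 1) B') j
          = ∑ B' ∈ (Icc 1 n).powersetCard r', Nat.nth (· ∈ B') j := by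
        apply Finset.sum_congr rfl
        intro B' hB'
        have hc : #B' = r' := (Finset.mem_powersetCard.mp hB').2
        exact nth_insert_lt (hbound B' hB') (by omega)
      rw [hcong, ih (r' + 1) j hj, ih r' j hcase,
        Nat.choose_succ_succ (n + 1) (r' + 1)]
      ring
    · have hjr : j = r' := by omega
      subst hjr
      have hcong : ∑ B' ∈ (Icc 1 n).powersetCard j,
          Nat.nth (· ∈ insert (n + 1) B') j
          = ∑ _B' ∈ (Icc 1 n).powersetCard j, (n + 1) := by
        apply Finset.sum_congr rfl
        intro B' hB'
        have hc : #B' = j := (Finset.mem_powersetCard.mp hB').2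
        rw [← hc]
        exact nth_insert_top (hbound B' hB')
      rw [hcong, ih (j + 1) j (by omega), Finset.sum_const,
        Finset.card_powersetCard, Nat.card_Icc, smul_eq_mul]
      have h1 : n + 1 - 1 = n := by omega
      rw [h1]
      have hsucc : (n + 1) * n.choose j = (j + 1) * (n + 1).choose (j + 1) :=
        (Nat.add_one_mul_choose_eq n j).trans (Nat.mul_comm _ _)
      have pas : (n + 1 + 1).choose (j + 1 + 1)
          = (n + 1).choose (j + 1) + (n + 1).choose (j + 1 + 1) :=
        Nat.choose_succ_succ _ _
      rw [pas]
      zify at hsucc ⊢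
      linear_combination hsucc

def Tset (m : ℕ) (B : Finset ℕ) : Set ℕ :=
  {x | x = 0 ∨ x = m ∨ (∃ b ∈ B, x = m + b) ∨ 2 * m ≤ x}

lemma Tset_compl {m : ℕ} {B : Finset ℕ} (hm : 2 ≤ m) (hB : B ⊆ Icc 1 (m - 1)) :
    (Tset m B)ᶜ = ↑(Ico 1 (2 * m) \ insert m (B.image (m + ·))) := by
  ext x
  simp only [Set.mem_compl_iff, Tset, Set.mem_setOf_eq, Finset.mem_coe,
    Finset.mem_sdiff, Finset.mem_Ico, Finset.mem_insert]
  by_cases hx : x ∈ B.image (m + ·)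
  · obtain ⟨b, hb, hbe⟩ := Finset.mem_image.mp hx
    have hex : x = 0 ∨ x = m ∨ (∃ b ∈ B, x = m + b) ∨ 2 * m ≤ x :=
      Or.inr (Or.inr (Or.inl ⟨b, hb, hbe.symm⟩))
    constructor
    · intro h; exact absurd hex h
    · rintro ⟨-, h2⟩; exact absurd (Or.inr hx) h2
  · have hne : ¬ ∃ b ∈ B, x = m + b := by
      rintro ⟨b, hb, rfl⟩; exact hx (Finset.mem_image.mpr ⟨b, hb, rfl⟩)
    simp only [hne, hx, or_false, false_or, or_false]
    constructor
    · intro h; push_neg at h; omega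
    · intro h; push_neg at h; omega

lemma Tset_genus {m : ℕ} {B : Finset ℕ} (hm : 2 ≤ m) (hB : B ⊆ Icc 1 (m - 1)) :
    genus (Tset m B) = 2 * m - 2 - #B := by
  have himg : ∀ y ∈ B.image (m + ·), m + 1 ≤ y ∧ y ≤ 2 * m - 1 := by
    intro y hy
    obtain ⟨b, hb, rfl⟩ := Finset.mem_image.mp hy
    have := hB hb; rw [Finset.mem_Icc] at this; omega
  rw [genus, Tset_compl hm hB, Set.ncard_coe_finset]
  have hsub : insert m (B.image (m + ·)) ⊆ Ico 1 (2 * m) := by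
    intro y hy
    rw [Finset.mem_insert] at hy
    rw [Finset.mem_Ico]
    rcases hy with rfl | hy
    · omega
    · have := himg y hy; omega
  have hnotmem : m ∉ B.image (m + ·) := by
    intro h; have := himg m h; omega
  rw [Finset.card_sdiff_of_subset hsub, Finset.card_insert_of_notMem hnotmem,
    Finset.card_image_of_injective _ (add_right_injective m), Nat.card_Ico]
  omega

lemma Tset_isNS {m : ℕ} {B : Finset ℕ} (hm : 2 ≤ m) (hB : B ⊆ Icc 1 (m - 1)) :
    IsNumericalSemigroup (Tset m B) := by
  have key : ∀ x ∈ Tset m B, x = 0 ∨ m ≤ x := by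
    rintro x (rfl | rfl | ⟨c, hc, rfl⟩ | hx)
    · exact Or.inl rfl
    · exact Or.inr le_rfl
    · have := hB hc; rw [Finset.mem_Icc] at this; right; omega
    · right; omega
  refine ⟨Or.inl rfl, ?_, ?_⟩
  · intro a ha b hb
    rcases key a ha with rfl | ha2
    · simpa using hb
    rcases key b hb with rfl | hb2
    · simpa using ha
    exact Or.inr (Or.inr (Or.inr (by omega)))
  · apply Set.Finite.subset (Set.finite_Iio (2 * m))
    intro x hx
    rw [Set.mem_compl_iff] at hx
    rw [Set.mem_Iio]
    by_contra h
    exact hx (Or.inr (Or.inr (Or.inr (by omega))))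

lemma Tset_mult {m : ℕ} {B : Finset ℕ} (hm : 2 ≤ m) (hB : B ⊆ Icc 1 (m - 1)) :
    mult (Tset m B) = m := by
  classical
  have hPm : m ∈ Tset m B ∧ m ≠ 0 := ⟨Or.inr (Or.inl rfl), by omega⟩
  have h := Nat.nth_count (p := fun n => n ∈ Tset m B ∧ n ≠ 0) hPm
  have hc : Nat.count (fun n => n ∈ Tset m B ∧ n ≠ 0) m = 0 := by
    rw [Nat.count_eq_card_filter_range, Finset.card_eq_zero, Finset.filter_eq_empty_iff]
    intro y hy
    rw [Finset.mem_range] at hy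
    rintro ⟨hyT, hy0⟩
    rcases hyT with rfl | rfl | ⟨b, hb, rfl⟩ | h2
    · exact hy0 rfl
    · omega
    · have := hB hb; rw [Finset.mem_Icc] at this; omega
    · omega
  rw [hc] at h
  rw [mult, elt]
  simpa using h

lemma Tset_elt {m : ℕ} {B : Finset ℕ} (hm : 2 ≤ m) (hB : B ⊆ Icc 1 (m - 1))
    {k : ℕ} (hk1 : 1 ≤ k) (hk2 : k ≤ #B) :
    elt (Tset m B) (k + 1) = m + Nat.nth (· ∈ B) (k - 1) := by
  classical
  set x := Nat.nth (· ∈ B) (k - 1) with hxdef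
  have hxB : x ∈ B := nth_finset_mem (by omega)
  have hxI : 1 ≤ x ∧ x ≤ m - 1 := by have := hB hxB; rwa [Finset.mem_Icc] at this
  have hPx : (m + x) ∈ Tset m B ∧ (m + x) ≠ 0 :=
    ⟨Or.inr (Or.inr (Or.inl ⟨x, hxB, rfl⟩)), by omega⟩
  have h := Nat.nth_count (p := fun n => n ∈ Tset m B ∧ n ≠ 0) hPx
  have hc : Nat.count (fun n => n ∈ Tset m B ∧ n ≠ 0) (m + x) = k := by
    rw [Nat.count_eq_card_filter_range]
    have heq : (Finset.range (m + x)).filter (fun n => n ∈ Tset m B ∧ n ≠ 0)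
        = insert m ((B.filter (· < x)).image (m + ·)) := by
      ext y
      simp only [Finset.mem_filter, Finset.mem_range, Finset.mem_insert, Finset.mem_image]
      constructor
      · rintro ⟨hy, hyT, hy0⟩
        rcases hyT with rfl | rfl | ⟨b, hb, rfl⟩ | h2
        · exact absurd rfl hy0
        · exact Or.inl rfl
        · exact Or.inr ⟨b, ⟨hb, by omega⟩, rfl⟩
        · omega
      · rintro (rfl | ⟨b, hb, rfl⟩)
        · exact ⟨by omega, Or.inr (Or.inl rfl), by omega⟩
        · have hbI := hB hb.1
          rw [Finset.mem_Icc] at hbI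
          exact ⟨by omega, Or.inr (Or.inr (Or.inl ⟨b, hb.1, rfl⟩)), by omega⟩
    have hnm : m ∉ (B.filter (· < x)).image (m + ·) := by
      intro hmem
      obtain ⟨b, hb, hbe⟩ := Finset.mem_image.mp hmem
      rw [Finset.mem_filter] at hb
      have := hB hb.1; rw [Finset.mem_Icc] at this; omega
    rw [heq, Finset.card_insert_of_notMem hnm,
      Finset.card_image_of_injective _ (add_right_injective m),
      nth_finset_count (by omega : k - 1 < #B)]
    omega
  rw [hc] at h
  rw [elt]
  simpa [Nat.add_sub_cancel] using h

lemma Tset_frob {m : ℕ} {B : Finset ℕ} (hm : 2 ≤ m) (hB : B ⊆ Icc 1 (m - 1)) :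
    frob (Tset m B) < 2 * m := by
  rw [frob, Tset_compl hm hB]
  set G := Ico 1 (2 * m) \ insert m (B.image (m + ·)) with hG
  have h1 : 1 ∈ G := by
    rw [hG, Finset.mem_sdiff, Finset.mem_Ico, Finset.mem_insert]
    refine ⟨⟨le_rfl, by omega⟩, ?_⟩
    rintro (h | h)
    · omega
    · obtain ⟨b, hb, hbe⟩ := Finset.mem_image.mp h
      have := hB hb; rw [Finset.mem_Icc] at this; omega
  have hne : (↑G : Set ℕ).Nonempty := ⟨1, by exact_mod_cast h1⟩
  have hbdd : BddAbove (↑G : Set ℕ) := G.finite_toSet.bddAbove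
  have hmem := Nat.sSup_mem hne hbdd
  rw [Finset.mem_coe, hG, Finset.mem_sdiff, Finset.mem_Ico] at hmem
  exact hmem.1.2

theorem stmt10 (g m k : ℕ) (hm1 : (g : ℚ) / 2 + 1 ≤ (m : ℚ)) (hm2 : m ≤ g + 1)
    (hk : 1 ≤ k) (hk2 : k + g + 2 ≤ 2 * m)
    (𝒮 : Set (Set ℕ))
    (h𝒮 : 𝒮 = {S : Set ℕ | IsNumericalSemigroup S ∧ genus S = g ∧ mult S = m ∧
      frob S < 2 * m}) :
    𝒮.Finite ∧
    (∑ᶠ S ∈ 𝒮, ((elt S (k + 1) : ℕ) : ℚ)) / (𝒮.ncard : ℚ)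
      = (m : ℚ) + (m : ℚ) * (k : ℚ) / (2 * (m : ℚ) - (g : ℚ) - 1) := by
  classical
  have hm : 2 ≤ m := by omega
  set r : ℕ := 2 * m - g - 2 with hr
  have hkr : k ≤ r := by omega
  have hrm : r ≤ m - 1 := by omega
  set Pc := (Icc 1 (m - 1)).powersetCard r with hPc
  have himage : 𝒮 = Tset m '' ↑Pc := by
    rw [h𝒮]
    ext S
    simp only [Set.mem_setOf_eq, Set.mem_image, Finset.mem_coe]
    constructor
    · rintro ⟨hNS, hg, hmu, hf⟩
      set B := ((Ioo m (2 * m)).filter (· ∈ S)).image (· - m) with hBdef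
      have hBsub : B ⊆ Icc 1 (m - 1) := by
        intro b hb
        obtain ⟨y, hy, rfl⟩ := Finset.mem_image.mp hb
        rw [Finset.mem_filter, Finset.mem_Ioo] at hy
        rw [Finset.mem_Icc]
        omega
      have hSinf : {y | y ∈ S ∧ y ≠ 0}.Nonempty := by
        have h2 : Sᶜᶜ.Infinite := hNS.2.2.infinite_compl
        rw [compl_compl] at h2
        obtain ⟨y, hy, hy0⟩ := h2.exists_gt 0
        exact ⟨y, hy, by omega⟩
      have hsinf : m = sInf {y | y ∈ S ∧ y ≠ 0} := by
        conv_lhs => rw [← hmu]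
        simp [mult, elt, Nat.nth_zero]
      have hmS : m ∈ S ∧ m ≠ 0 := by
        have := Nat.sInf_mem hSinf
        rwa [← hsinf] at this
      have hmin : ∀ y, y ∈ S → y ≠ 0 → m ≤ y := by
        intro y hy hy0
        rw [hsinf]
        exact Nat.sInf_le ⟨hy, hy0⟩
      have hbig : ∀ y, 2 * m ≤ y → y ∈ S := by
        intro y hy
        by_contra hyS
        have hle : y ≤ sSup Sᶜ := le_csSup hNS.2.2.bddAbove hyS
        rw [frob] at hf
        omega
      have hTS : Tset m B = S := by
        ext x
        constructor
        · rintro (rfl | rfl | ⟨b, hb, rfl⟩ | hx)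
          · exact hNS.1
          · exact hmS.1
          · obtain ⟨y, hy, rfl⟩ := Finset.mem_image.mp hb
            rw [Finset.mem_filter, Finset.mem_Ioo] at hy
            have he : m + (y - m) = y := by omega
            rw [he]
            exact hy.2
          · exact hbig x hx
        · intro hxS
          rcases Nat.eq_zero_or_pos x with rfl | hx0
          · exact Or.inl rfl
          have hxm : m ≤ x := hmin x hxS (by omega)
          rcases eq_or_lt_of_le hxm with rfl | hxm2
          · exact Or.inr (Or.inl rfl)
          rcases Nat.lt_or_ge x (2 * m) with hx2 | hx2
          · refine Or.inr (Or.inr (Or.inl ⟨x - m, ?_, by omega⟩))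
            exact Finset.mem_image.mpr
              ⟨x, Finset.mem_filter.mpr ⟨Finset.mem_Ioo.mpr ⟨hxm2, hx2⟩, hxS⟩, rfl⟩
          · exact Or.inr (Or.inr (Or.inr hx2))
      have hcard : #B = r := by
        have hg2 := Tset_genus hm hBsub
        rw [hTS, hg] at hg2
        have hle : #B ≤ m - 1 := by
          calc #B ≤ #(Icc 1 (m - 1)) := Finset.card_le_card hBsub
          _ = m - 1 := by rw [Nat.card_Icc]; omega
        omega
      exact ⟨B, Finset.mem_powersetCard.mpr ⟨hBsub, hcard⟩, hTS⟩
    · rintro ⟨B, hB, rfl⟩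
      obtain ⟨hBsub, hBcard⟩ := Finset.mem_powersetCard.mp hB
      refine ⟨Tset_isNS hm hBsub, ?_, Tset_mult hm hBsub, Tset_frob hm hBsub⟩
      rw [Tset_genus hm hBsub, hBcard]
      omega
  have hinj : Set.InjOn (Tset m) ↑Pc := by
    have key : ∀ C D : Finset ℕ, C ⊆ Icc 1 (m - 1) → D ⊆ Icc 1 (m - 1) →
        Tset m C = Tset m D → C ⊆ D := by
      intro C D hC hD hCD b hb
      have hbI := hC hb
      rw [Finset.mem_Icc] at hbI
      have hmem : m + b ∈ Tset m D := by
        rw [← hCD]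
        exact Or.inr (Or.inr (Or.inl ⟨b, hb, rfl⟩))
      rcases hmem with h | h | ⟨b', hb', he'⟩ | h
      · omega
      · omega
      · have hbb : b = b' := by omega
        rwa [hbb]
      · omega
    intro B1 h1 B2 h2 he
    rw [Finset.mem_coe, Finset.mem_powersetCard] at h1 h2
    exact Finset.Subset.antisymm (key B1 B2 h1.1 h2.1 he) (key B2 B1 h2.1 h1.1 he.symm)
  refine ⟨by rw [himage]; exact Pc.finite_toSet.image _, ?_⟩
  have hncard : 𝒮.ncard = (m - 1).choose r := by
    rw [himage, Set.ncard_image_of_injOn hinj, Set.ncard_coe_finset, hPc,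
      Finset.card_powersetCard, Nat.card_Icc]
    congr 2
    omega
  have hsum : (∑ᶠ S ∈ 𝒮, ((elt S (k + 1) : ℕ) : ℚ))
      = (((m - 1).choose r * m + k * m.choose (r + 1) : ℕ) : ℚ) := by
    rw [himage, finsum_mem_image hinj, finsum_mem_coe_finset]
    have hcong : ∀ B ∈ Pc, ((elt (Tset m B) (k + 1) : ℕ) : ℚ)
        = (((m + Nat.nth (· ∈ B) (k - 1) : ℕ) : ℚ)) := by
      intro B hB
      obtain ⟨hBsub, hBcard⟩ := Finset.mem_powersetCard.mp hB
      rw [Tset_elt hm hBsub hk (by omega)]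
    rw [Finset.sum_congr rfl hcong, ← Nat.cast_sum]
    congr 1
    rw [Finset.sum_add_distrib, Finset.sum_const, smul_eq_mul, hPc,
      Finset.card_powersetCard, Nat.card_Icc,
      sum_nth_powersetCard (m - 1) r (k - 1) (by omega)]
    have e1 : m - 1 + 1 - 1 = m - 1 := by omega
    have e2 : k - 1 + 1 = k := by omega
    have e3 : m - 1 + 1 = m := by omega
    rw [e1, e2, e3]
  rw [hsum, hncard]
  have hC1 : (((m - 1).choose r : ℕ) : ℚ) ≠ 0 := by
    exact_mod_cast (Nat.choose_pos hrm).ne'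
  have hr1 : ((r : ℚ) + 1) ≠ 0 := by positivity
  have hden : 2 * (m : ℚ) - g - 1 = (r : ℚ) + 1 := by
    have h4 : ((r + g + 2 : ℕ) : ℚ) = ((2 * m : ℕ) : ℚ) := by
      congr 1
      omega
    push_cast at h4
    linarith
  have hkey : (m : ℚ) * ((m - 1).choose r : ℚ)
      = ((r : ℚ) + 1) * (m.choose (r + 1) : ℚ) := by
    have h5 := Nat.add_one_mul_choose_eq (m - 1) r
    have e3 : m - 1 + 1 = m := by omega
    rw [e3] at h5
    have := congrArg (fun n : ℕ => (n : ℚ)) h5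
    push_cast at this
    linarith
  rw [hden]
  push_cast
  field_simp
  linear_combination (-(k : ℚ)) * hkey
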